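/- arXiv:2511.11254 — 5 statements merged into one kernel-verified Lean document; each statement's English description precedes it below -/
import Mathlib

section
/- Let G be a finite group, F a group, (F, G, ◁, ▷) a matched pair, and σ, τ cocycle data over k, and let H = k^G τ#_σ kF be the associated Hopf algebra. If H admits a coquasitriangular structure, then O_f O_{f'} = O_{f'} O_f for all f, f' ∈ F, where O_f = {x ▷ f : x ∈ G} and O_f O_{f'} = {x y : x ∈ O_f, y ∈ O_{f'}} ⊆ F. -/
/-- A matched pair of groups `(F, G, ◁, ▷)`: `rtr g f = g ▷ f` is an action of the
group `G` on the set `F`, and `ltl g f = g ◁ f` is an action of the group `F` on the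
set `G`, satisfying the matched pair compatibility conditions. -/
structure MatchedPair (F G : Type*) [Group F] [Group G] where
  rtr : G → F → F
  ltl : G → F → G
  one_rtr : ∀ f, rtr 1 f = f
  mul_rtr : ∀ g g' f, rtr (g * g') f = rtr g (rtr g' f)
  ltl_one : ∀ g, ltl g 1 = g
  ltl_mul : ∀ g f f', ltl g (f * f') = ltl (ltl g f) f'
  rtr_mul : ∀ g f f', rtr g (f * f') = rtr g f * rtr (ltl g f) f'
  mul_ltl : ∀ g g' f, ltl (g * g') f = ltl g (rtr g' f) * ltl g' f

/-- Cocycle data `(σ, τ)` for the abelian extension `k^G τ#_σ kF`. -/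
structure CocycleData (k F G : Type*) [Field k] [Group F] [Group G]
    (mp : MatchedPair F G) where
  sig : G → F → F → kˣ
  tau : G → G → F → kˣ
  sig_one_left : ∀ g f, sig g 1 f = 1
  sig_one_right : ∀ g f, sig g f 1 = 1
  one_sig : ∀ f f', sig 1 f f' = 1
  sig_cocycle : ∀ g f f' f'',
    sig (mp.ltl g f) f' f'' * sig g f (f' * f'') = sig g f f' * sig g (f * f') f''
  one_tau : ∀ g f, tau 1 g f = 1
  tau_one : ∀ g f, tau g 1 f = 1
  tau_one_right : ∀ g g', tau g g' 1 = 1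
  tau_cocycle : ∀ g g' g'' f,
    tau g g' (mp.rtr g'' f) * tau (g * g') g'' f = tau g (g' * g'') f * tau g' g'' f
  compat : ∀ g g' f f',
    sig (g * g') f f' * tau g g' (f * f')
      = sig g (mp.rtr g' f) (mp.rtr (mp.ltl g' f) f') * sig g' f f' * tau g g' f
        * tau (mp.ltl g (mp.rtr g' f)) (mp.ltl g' f) f'

/-- The product `(p_g # f)(p_{g'} # f') = δ_{g ◁ f, g'} σ(g; f, f') p_g # (f f')` of two
basis elements of `H = k^G τ#_σ kF`, as an element of `H` (realized as `(G × F) →₀ k`). -/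
noncomputable def mulB {k F G : Type*} [Field k] [Group F] [Group G] [DecidableEq G]
    (mp : MatchedPair F G) (cd : CocycleData k F G mp) (i j : G × F) : (G × F) →₀ k :=
  if mp.ltl i.1 i.2 = j.1 then
    Finsupp.single (i.1, i.2 * j.2) ((cd.sig i.1 i.2 j.2 : kˣ) : k)
  else 0

/-- `R` (given by its values `R g f h f' = R(p_g # f, p_h # f')` on the basis
`{p_g # f}` of `H = k^G τ#_σ kF`) is a coquasitriangular structure on `H`:
it is convolution invertible, satisfies `R(a, bc) = Σ R(a₁, c) R(a₂, b)` and
`R(ab, c) = Σ R(a, c₁) R(b, c₂)`, and the quasi-commutativity axiom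
`Σ R(a₁, b₁) a₂ b₂ = Σ b₁ a₁ R(a₂, b₂)`, all expressed on basis elements using
`Δ(p_g # f) = Σ_x τ(g x⁻¹, x; f) (p_{g x⁻¹} # (x ▷ f)) ⊗ (p_x # f)` and
`ε(p_g # f) = δ_{g,1}`. -/
structure IsCQT {k F G : Type*} [Field k] [Group F] [Group G] [Fintype G] [DecidableEq G]
    (mp : MatchedPair F G) (cd : CocycleData k F G mp)
    (R : G → F → G → F → k) : Prop where
  conv_inv : ∃ R' : G → F → G → F → k,
    (∀ (g h : G) (f f' : F),
      ∑ x : G, ∑ y : G,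
        ((cd.tau (g * x⁻¹) x f : kˣ) : k) * ((cd.tau (h * y⁻¹) y f' : kˣ) : k) *
          R (g * x⁻¹) (mp.rtr x f) (h * y⁻¹) (mp.rtr y f') * R' x f y f'
        = (if g = 1 then (1 : k) else 0) * (if h = 1 then (1 : k) else 0)) ∧
    (∀ (g h : G) (f f' : F),
      ∑ x : G, ∑ y : G,
        ((cd.tau (g * x⁻¹) x f : kˣ) : k) * ((cd.tau (h * y⁻¹) y f' : kˣ) : k) *
          R' (g * x⁻¹) (mp.rtr x f) (h * y⁻¹) (mp.rtr y f') * R x f y f'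
        = (if g = 1 then (1 : k) else 0) * (if h = 1 then (1 : k) else 0))
  cqt1 : ∀ (g h l : G) (f f' f'' : F),
    (if mp.ltl h f' = l then (1 : k) else 0) * ((cd.sig h f' f'' : kˣ) : k)
        * R g f h (f' * f'')
      = ∑ x : G, ((cd.tau (g * x⁻¹) x f : kˣ) : k)
          * R (g * x⁻¹) (mp.rtr x f) l f'' * R x f h f'
  cqt2 : ∀ (g h l : G) (f f' f'' : F),
    (if mp.ltl g f = h then (1 : k) else 0) * ((cd.sig g f f' : kˣ) : k)
        * R g (f * f') l f''
      = ∑ x : G, ((cd.tau (l * x⁻¹) x f'' : kˣ) : k)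
          * R g f (l * x⁻¹) (mp.rtr x f'') * R h f' x f''
  qcomm : ∀ (g h : G) (f f' : F),
    (∑ x : G, ∑ y : G,
      (((cd.tau (g * x⁻¹) x f : kˣ) : k) * ((cd.tau (h * y⁻¹) y f' : kˣ) : k) *
        R (g * x⁻¹) (mp.rtr x f) (h * y⁻¹) (mp.rtr y f')) • mulB mp cd (x, f) (y, f'))
      = ∑ x : G, ∑ y : G,
        (((cd.tau (g * x⁻¹) x f : kˣ) : k) * ((cd.tau (h * y⁻¹) y f' : kˣ) : k) *
          R x f y f') • mulB mp cd (h * y⁻¹, mp.rtr y f') (g * x⁻¹, mp.rtr x f)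

private lemma MatchedPair.one_ltl {F G : Type*} [Group F] [Group G]
    (mp : MatchedPair F G) (f : F) : mp.ltl 1 f = 1 := by
  have h := mp.mul_ltl 1 1 f
  rw [one_mul, mp.one_rtr] at h
  exact (right_eq_mul.mp h)

/-- If `H = k^G τ#_σ kF` admits a coquasitriangular structure, then the orbit sets
satisfy `O_f O_{f'} = O_{f'} O_f` for all `f, f' ∈ F`, where `O_f = {x ▷ f : x ∈ G}`. -/
theorem orbits_commute_of_cqt {k F G : Type*} [Field k] [IsAlgClosed k] [CharZero k]
    [Group F] [Group G] [Fintype G] [DecidableEq G]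
    (mp : MatchedPair F G) (cd : CocycleData k F G mp)
    (hR : ∃ R : G → F → G → F → k, IsCQT mp cd R) (f f' : F) :
    Set.image2 (· * ·) (Set.range fun x : G => mp.rtr x f)
        (Set.range fun x : G => mp.rtr x f')
      = Set.image2 (· * ·) (Set.range fun x : G => mp.rtr x f')
        (Set.range fun x : G => mp.rtr x f) := by
  obtain ⟨R, hcqt⟩ := hR
  have key : ∀ a b : F, ∃ x y : G, mp.rtr y b * mp.rtr x a = a * b := by
    intro a b
    by_contra hcon
    push_neg at hcon
    have hR0 : ∀ x₀ y₀ : G, R x₀ a y₀ b = 0 := by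
      intro x₀ y₀
      have hq := hcqt.qcomm x₀ y₀ a b
      have hev := DFunLike.congr_fun hq (1, mp.rtr y₀ b * mp.rtr x₀ a)
      have hL : (∑ x : G, ∑ y : G,
          (((cd.tau (x₀ * x⁻¹) x a : kˣ) : k) * ((cd.tau (y₀ * y⁻¹) y b : kˣ) : k) *
            R (x₀ * x⁻¹) (mp.rtr x a) (y₀ * y⁻¹) (mp.rtr y b)) • mulB mp cd (x, a) (y, b))
            (1, mp.rtr y₀ b * mp.rtr x₀ a) = 0 := by
        rw [Finsupp.finset_sum_apply]
        refine Finset.sum_eq_zero fun x _ => ?_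
        rw [Finsupp.finset_sum_apply]
        refine Finset.sum_eq_zero fun y _ => ?_
        rw [Finsupp.smul_apply]
        unfold mulB
        dsimp only
        split
        · refine smul_eq_zero_of_right _ ?_
          refine Finsupp.single_eq_of_ne' fun hcontra => ?_
          injection hcontra with h1 h2
          exact hcon x₀ y₀ h2.symm
        · simp
      have hRside : (∑ x : G, ∑ y : G,
          (((cd.tau (x₀ * x⁻¹) x a : kˣ) : k) * ((cd.tau (y₀ * y⁻¹) y b : kˣ) : k) *
            R x a y b) • mulB mp cd (y₀ * y⁻¹, mp.rtr y b) (x₀ * x⁻¹, mp.rtr x a))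
            (1, mp.rtr y₀ b * mp.rtr x₀ a) = R x₀ a y₀ b := by
        rw [Finsupp.finset_sum_apply]
        rw [Finset.sum_eq_single x₀]
        · rw [Finsupp.finset_sum_apply]
          rw [Finset.sum_eq_single y₀]
          · rw [Finsupp.smul_apply]
            unfold mulB
            dsimp only
            rw [if_pos (by simp [mp.one_ltl])]
            simp only [mul_inv_cancel]
            rw [Finsupp.single_eq_same]
            simp [cd.one_tau, cd.one_sig]
          · intro y _ hy
            rw [Finsupp.smul_apply]
            unfold mulB
            dsimp only
            split
            · refine smul_eq_zero_of_right _ ?_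
              refine Finsupp.single_eq_of_ne' fun hcontra => ?_
              injection hcontra with h1 h2
              exact hy (mul_inv_eq_one.mp h1).symm
            · simp
          · intro h; exact absurd (Finset.mem_univ y₀) h
        · intro x _ hx
          rw [Finsupp.finset_sum_apply]
          refine Finset.sum_eq_zero fun y _ => ?_
          rw [Finsupp.smul_apply]
          unfold mulB
          dsimp only
          split
          next hc =>
            refine smul_eq_zero_of_right _ ?_
            refine Finsupp.single_eq_of_ne' fun hcontra => ?_
            injection hcontra with h1 h2
            have hyy : y = y₀ := (mul_inv_eq_one.mp h1).symm
            subst hyy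
            rw [h1, mp.one_ltl] at hc
            exact hx (mul_inv_eq_one.mp hc.symm).symm
          next => simp
        · intro h; exact absurd (Finset.mem_univ x₀) h
      rw [hL, hRside] at hev
      exact hev.symm
    obtain ⟨R', _, h2⟩ := hcqt.conv_inv
    have h1 := h2 1 1 a b
    simp [hR0] at h1
  have incl : ∀ a b : F,
      Set.image2 (· * ·) (Set.range fun x : G => mp.rtr x a)
          (Set.range fun x : G => mp.rtr x b)
        ⊆ Set.image2 (· * ·) (Set.range fun x : G => mp.rtr x b)
          (Set.range fun x : G => mp.rtr x a) := by
    intro a b z hz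
    rw [Set.mem_image2] at hz
    obtain ⟨p, hp, q, hq, rfl⟩ := hz
    obtain ⟨u, rfl⟩ := hp
    obtain ⟨v, rfl⟩ := hq
    obtain ⟨x, y, hxy⟩ := key (mp.rtr u a) (mp.rtr v b)
    rw [Set.mem_image2]
    exact ⟨mp.rtr y (mp.rtr v b), ⟨y * v, mp.mul_rtr y v b⟩,
      mp.rtr x (mp.rtr u a), ⟨x * u, mp.mul_rtr x u a⟩, hxy⟩
  exact Set.Subset.antisymm (incl f f') (incl f' f)
end

section
/- Let G be a finite group, F a non-abelian group, (F, G, ◁, ▷) a matched pair, and σ, τ cocycle data over k, and let H = k^G τ#_σ kF be the associated Hopf algebra. If x ▷ f = f for every x ∈ G and f ∈ F, then H admits no coquasitriangular structure. -/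
/-- If `F` is non-abelian and `x ▷ f = f` for all `x ∈ G`, `f ∈ F`, then
`H = k^G τ#_σ kF` admits no coquasitriangular structure. -/
theorem no_cqt_of_trivial_action_nonabelian {k F G : Type*} [Field k] [IsAlgClosed k]
    [CharZero k] [Group F] [Group G] [Fintype G] [DecidableEq G]
    (mp : MatchedPair F G) (cd : CocycleData k F G mp)
    (hF : ∃ a b : F, a * b ≠ b * a)
    (hact : ∀ (x : G) (f : F), mp.rtr x f = f) :
    ¬ ∃ R : G → F → G → F → k, IsCQT mp cd R := by
  rintro ⟨R, hR⟩
  obtain ⟨f0, f1, hcomm⟩ := hF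
  have hcomm' : f1 * f0 ≠ f0 * f1 := fun h => hcomm h.symm
  have hltl1 : ∀ f : F, mp.ltl 1 f = 1 := by
    intro f
    have h := mp.mul_ltl 1 1 f
    rw [one_mul, mp.one_rtr] at h
    exact (right_eq_mul.mp h)
  have key : ∀ a b : G, R a f0 b f1 = 0 := by
    intro a b
    have hq := DFunLike.congr_fun (hR.qcomm a b f0 f1) (1, f0 * f1)
    simp only [mulB, hact, Finsupp.coe_finset_sum, Finset.sum_apply,
      Finsupp.smul_apply, apply_ite (fun m : (G × F) →₀ k => m (1, f0 * f1)),
      Finsupp.single_apply, Finsupp.coe_zero, Pi.zero_apply, Prod.mk.injEq,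
      hcomm', and_false, if_false, smul_zero, mul_ite, mul_zero, smul_eq_mul,
      Finset.sum_const_zero] at hq
    simp only [ite_and, Finset.sum_ite_eq, Finset.mem_univ, if_true,
      Finset.sum_ite_eq', eq_self_iff_true] at hq
    rw [Finset.sum_eq_single 1] at hq
    · have hne : ∀ c : G, ((c, f1 * f0) : G × F) ≠ (1, f0 * f1) :=
        fun c h => hcomm' (congrArg Prod.snd h)
      simp only [Finsupp.single_eq_of_ne' (hne _), mul_zero, ite_self,
        Finset.sum_const_zero, hltl1, inv_one, mul_one, cd.tau_one, cd.one_sig,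
        Units.val_one, one_mul] at hq
      simpa using hq
    · intro x _ hx
      simp [hx]
    · simp
  obtain ⟨R', h1, _⟩ := hR.conv_inv
  have h := h1 1 1 f0 f1
  simp only [hact, one_mul, key, mul_zero, zero_mul, Finset.sum_const_zero,
    if_true] at h
  exact one_ne_zero h.symm
end

section
/- Let G be a finite abelian group, F a group, (F, G, ◁, ▷) a matched pair, σ cocycle data and τ trivial (τ(g, g'; f) = 1 for all g, g' ∈ G, f ∈ F). Suppose the Hopf algebra H = k^G τ#_σ kF admits a coquasitriangular structure. If f, f' ∈ F and g ∈ G satisfy g ∈ G_f and g ∉ G_{f'}, then g ◁ f'' ∉ G_{f'} for every f'' ∈ O_f, where G_f = {x ∈ G : x ▷ f = f} and O_f = {x ▷ f : x ∈ G}. -/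
open Classical in
lemma mulB_apply {k F G : Type*} [Field k] [Group F] [Group G] [DecidableEq G]
    (mp : MatchedPair F G) (cd : CocycleData k F G mp) (i j : G × F) (p : G) (m : F) :
    (mulB mp cd i j) (p, m)
      = if mp.ltl i.1 i.2 = j.1 ∧ i.1 = p ∧ i.2 * j.2 = m
        then ((cd.sig i.1 i.2 j.2 : kˣ) : k) else 0 := by
  unfold mulB
  by_cases h : mp.ltl i.1 i.2 = j.1
  · simp [h, Finsupp.single_apply, Prod.ext_iff]
  · simp [h]


section C
variable {k F G : Type*} [Field k] [Group F] [CommGroup G] [Fintype G] [DecidableEq G]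
variable (mp : MatchedPair F G) (cd : CocycleData k F G mp)
variable (htau : ∀ (g g' : G) (f : F), cd.tau g g' f = 1)
variable (R : G → F → G → F → k) (hc : IsCQT mp cd R)

open Classical in
include htau hc in
lemma qcomm_pt (g h : G) (f f' : F) (p : G) (m : F) :
    (∑ x : G, ∑ y : G,
      R (g * x⁻¹) (mp.rtr x f) (h * y⁻¹) (mp.rtr y f') *
        (if mp.ltl x f = y ∧ x = p ∧ f * f' = m
          then ((cd.sig x f f' : kˣ) : k) else 0))
    = ∑ x : G, ∑ y : G,
      R x f y f' *
        (if mp.ltl (h * y⁻¹) (mp.rtr y f') = g * x⁻¹ ∧ h * y⁻¹ = p ∧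
            mp.rtr y f' * mp.rtr x f = m
          then ((cd.sig (h * y⁻¹) (mp.rtr y f') (mp.rtr x f) : kˣ) : k) else 0) := by
  have H := hc.qcomm g h f f'
  have H1 := DFunLike.congr_fun H (p, m)
  simp only [Finsupp.finset_sum_apply, Finsupp.smul_apply, smul_eq_mul,
    mulB_apply, htau, Units.val_one, one_mul] at H1
  exact H1

end C

section D
variable {k F G : Type*} [Field k] [Group F] [CommGroup G] [Fintype G] [DecidableEq G]
variable (mp : MatchedPair F G) (cd : CocycleData k F G mp)
variable (htau : ∀ (g g' : G) (f : F), cd.tau g g' f = 1)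
variable (R : G → F → G → F → k) (hc : IsCQT mp cd R)

lemma aux_one_ltl' (f : F) : mp.ltl 1 f = 1 := by
  have h := mp.mul_ltl 1 1 f
  rw [one_mul, mp.one_rtr] at h
  exact mul_eq_right.mp h.symm

lemma aux_rtr_one' (g : G) : mp.rtr g 1 = 1 := by
  have h := mp.rtr_mul g 1 1
  rw [one_mul, mp.ltl_one] at h
  exact mul_eq_left.mp h.symm

include htau hc in
lemma S1 (g v : G) (ψ : F) (hv : mp.rtr v ψ ≠ ψ) : R g 1 v ψ = 0 := by
  classical
  have H := qcomm_pt mp cd htau R hc g v 1 ψ 1 (mp.rtr v ψ)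
  have hL : (∑ x : G, ∑ y : G,
      R (g * x⁻¹) (mp.rtr x 1) (v * y⁻¹) (mp.rtr y ψ) *
        (if mp.ltl x 1 = y ∧ x = 1 ∧ 1 * ψ = mp.rtr v ψ
          then ((cd.sig x 1 ψ : kˣ) : k) else 0)) = 0 := by
    refine Finset.sum_eq_zero fun x _ => Finset.sum_eq_zero fun y _ => ?_
    refine mul_eq_zero_of_right _ (if_neg ?_)
    rintro ⟨-, -, h3⟩
    rw [one_mul] at h3
    exact hv h3.symm
  rw [hL] at H
  have hR : (∑ x : G, ∑ y : G,
      R x 1 y ψ *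
        (if mp.ltl (v * y⁻¹) (mp.rtr y ψ) = g * x⁻¹ ∧ v * y⁻¹ = 1 ∧
            mp.rtr y ψ * mp.rtr x 1 = mp.rtr v ψ
          then ((cd.sig (v * y⁻¹) (mp.rtr y ψ) (mp.rtr x 1) : kˣ) : k) else 0))
      = R g 1 v ψ := by
    have key : ∀ x y : G,
        R x 1 y ψ *
          (if mp.ltl (v * y⁻¹) (mp.rtr y ψ) = g * x⁻¹ ∧ v * y⁻¹ = 1 ∧
              mp.rtr y ψ * mp.rtr x 1 = mp.rtr v ψ
            then ((cd.sig (v * y⁻¹) (mp.rtr y ψ) (mp.rtr x 1) : kˣ) : k) else 0)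
        = if x = g ∧ y = v then R g 1 v ψ else 0 := by
      intro x y
      by_cases hy : y = v
      · subst hy
        by_cases hx : x = g
        · subst hx
          simp [aux_rtr_one', aux_one_ltl', cd.one_sig]
        · rw [if_neg, if_neg, mul_zero]
          · exact fun h => hx h.1
          · rintro ⟨h1, -, -⟩
            rw [mul_inv_cancel, aux_one_ltl'] at h1
            exact hx (mul_inv_eq_one.mp h1.symm).symm
      · rw [if_neg, if_neg, mul_zero]
        · exact fun h => hy h.2
        · rintro ⟨-, h2, -⟩
          exact hy (mul_inv_eq_one.mp h2).symm
    simp only [key]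
    simp [ite_and, Finset.sum_ite_eq']
  rw [hR] at H
  exact H.symm

include htau hc in
lemma T1 (u b x : G) (ψ : F) (hb : mp.rtr b ψ = ψ) (hx : mp.rtr x ψ = ψ) :
    R u 1 x ψ = R (u * b * (mp.ltl b ψ)⁻¹) 1 x ψ := by
  classical
  have comm_aux : ∀ a t : G, a * (a * t⁻¹)⁻¹ = t := by
    intro a t
    rw [mul_inv_rev, inv_inv, mul_comm t a⁻¹, ← mul_assoc, mul_inv_cancel, one_mul]
  have H := qcomm_pt mp cd htau R hc (u * b) (b * x) 1 ψ b ψ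
  have hL : (∑ x' : G, ∑ y' : G,
      R (u * b * x'⁻¹) (mp.rtr x' 1) (b * x * y'⁻¹) (mp.rtr y' ψ) *
        (if mp.ltl x' 1 = y' ∧ x' = b ∧ 1 * ψ = ψ
          then ((cd.sig x' 1 ψ : kˣ) : k) else 0)) = R u 1 x ψ := by
    have key : ∀ x' y' : G,
        R (u * b * x'⁻¹) (mp.rtr x' 1) (b * x * y'⁻¹) (mp.rtr y' ψ) *
          (if mp.ltl x' 1 = y' ∧ x' = b ∧ 1 * ψ = ψ
            then ((cd.sig x' 1 ψ : kˣ) : k) else 0)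
        = if x' = b ∧ y' = b then R u 1 x ψ else 0 := by
      intro x' y'
      by_cases h2 : x' = b
      · by_cases h3 : y' = b
        · rw [h2, h3, mul_inv_cancel_right, mul_comm b x, mul_inv_cancel_right,
            aux_rtr_one', hb, if_pos ⟨mp.ltl_one b, rfl, one_mul ψ⟩, if_pos ⟨rfl, rfl⟩,
            cd.sig_one_left, Units.val_one, mul_one]
        · have c1 : ¬(mp.ltl x' 1 = y' ∧ x' = b ∧ 1 * ψ = ψ) := by
            rintro ⟨e1, e2, -⟩
            exact h3 (by rw [← e1, e2, mp.ltl_one])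
          rw [if_neg c1, mul_zero, if_neg (fun h => h3 h.2)]
      · have c1 : ¬(mp.ltl x' 1 = y' ∧ x' = b ∧ 1 * ψ = ψ) := fun h => h2 h.2.1
        rw [if_neg c1, mul_zero, if_neg (fun h => h2 h.1)]
    simp only [key]
    simp [ite_and, Finset.sum_ite_eq']
  rw [hL] at H
  have hR : (∑ x' : G, ∑ y' : G,
      R x' 1 y' ψ *
        (if mp.ltl (b * x * y'⁻¹) (mp.rtr y' ψ) = u * b * x'⁻¹ ∧ b * x * y'⁻¹ = b ∧
            mp.rtr y' ψ * mp.rtr x' 1 = ψ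
          then ((cd.sig (b * x * y'⁻¹) (mp.rtr y' ψ) (mp.rtr x' 1) : kˣ) : k) else 0))
      = R (u * b * (mp.ltl b ψ)⁻¹) 1 x ψ := by
    have key : ∀ x' y' : G,
        R x' 1 y' ψ *
          (if mp.ltl (b * x * y'⁻¹) (mp.rtr y' ψ) = u * b * x'⁻¹ ∧ b * x * y'⁻¹ = b ∧
              mp.rtr y' ψ * mp.rtr x' 1 = ψ
            then ((cd.sig (b * x * y'⁻¹) (mp.rtr y' ψ) (mp.rtr x' 1) : kˣ) : k) else 0)
        = if x' = u * b * (mp.ltl b ψ)⁻¹ ∧ y' = x then R (u * b * (mp.ltl b ψ)⁻¹) 1 x ψ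
          else 0 := by
      intro x' y'
      by_cases h3 : y' = x
      · by_cases h2 : x' = u * b * (mp.ltl b ψ)⁻¹
        · rw [h3, h2, mul_inv_cancel_right, hx, aux_rtr_one',
            comm_aux (u * b) (mp.ltl b ψ), mul_one, if_pos ⟨rfl, rfl, rfl⟩,
            if_pos ⟨rfl, rfl⟩, cd.sig_one_right, Units.val_one, mul_one]
        · have c1 : ¬(mp.ltl (b * x * y'⁻¹) (mp.rtr y' ψ) = u * b * x'⁻¹ ∧
              b * x * y'⁻¹ = b ∧ mp.rtr y' ψ * mp.rtr x' 1 = ψ) := by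
            rintro ⟨e1, -, -⟩
            apply h2
            rw [h3, mul_inv_cancel_right, hx] at e1
            rw [e1, comm_aux (u * b) x']
          rw [if_neg c1, mul_zero, if_neg (fun h => h2 h.1)]
      · have c1 : ¬(mp.ltl (b * x * y'⁻¹) (mp.rtr y' ψ) = u * b * x'⁻¹ ∧
            b * x * y'⁻¹ = b ∧ mp.rtr y' ψ * mp.rtr x' 1 = ψ) := by
          rintro ⟨-, e2, -⟩
          exact h3 (mul_left_cancel (mul_inv_eq_iff_eq_mul.mp e2)).symm
        rw [if_neg c1, mul_zero, if_neg (fun h => h3 h.2)]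
    simp only [key]
    simp [ite_and, Finset.sum_ite_eq']
  rw [hR] at H
  exact H

include htau hc in
lemma Jorth (g h l : G) (ψ : F) :
    (if g = h then (1 : k) else 0) * R g 1 l ψ
      = ∑ x : G, R g 1 (l * x⁻¹) (mp.rtr x ψ) * R h 1 x ψ := by
  have H := hc.cqt2 g h l 1 1 ψ
  simp only [mp.ltl_one, cd.sig_one_left, htau, Units.val_one, one_mul, mul_one] at H
  exact H

include htau hc in
lemma exists_ne_zero (ψ : F) : ∃ h l : G, R h 1 l ψ ≠ 0 := by
  obtain ⟨R', -, h2⟩ := hc.conv_inv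
  have H := h2 1 1 1 ψ
  simp only [htau, Units.val_one, one_mul, if_true, if_pos trivial, mul_one] at H
  by_contra hcon
  push_neg at hcon
  rw [Finset.sum_eq_zero (fun x _ => Finset.sum_eq_zero (fun y _ => by
    rw [hcon x y, mul_zero])), ] at H
  exact (one_ne_zero : (1 : k) ≠ 0) H.symm

include htau hc in
lemma key_claim (b : G) (ψ : F) (hb : mp.rtr b ψ = ψ) : mp.ltl b ψ = b := by
  by_contra hd
  obtain ⟨h₀, l₀, hne⟩ := exists_ne_zero mp cd htau R hc ψ
  set h₁ := h₀ * b * (mp.ltl b ψ)⁻¹ with hh₁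
  have hneq : h₀ ≠ h₁ := by
    intro hE
    apply hd
    have : h₀ * 1 = h₀ * (b * (mp.ltl b ψ)⁻¹) := by
      rw [mul_one, ← mul_assoc, ← hh₁, ← hE]
    have h2 := mul_left_cancel this
    rw [eq_comm, mul_inv_eq_one] at h2
    exact h2.symm
  have hterm : ∀ x : G, R h₁ 1 x ψ = R h₀ 1 x ψ := by
    intro x
    by_cases hx : mp.rtr x ψ = ψ
    · exact (T1 mp cd htau R hc h₀ b x ψ hb hx).symm
    · rw [S1 mp cd htau R hc h₁ x ψ hx, S1 mp cd htau R hc h₀ x ψ hx]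
  have E0 := Jorth mp cd htau R hc h₀ h₁ l₀ ψ
  have E1 := Jorth mp cd htau R hc h₀ h₀ l₀ ψ
  rw [if_neg hneq, zero_mul] at E0
  rw [if_pos rfl, one_mul] at E1
  apply hne
  calc R h₀ 1 l₀ ψ
      = ∑ x : G, R h₀ 1 (l₀ * x⁻¹) (mp.rtr x ψ) * R h₀ 1 x ψ := E1
    _ = ∑ x : G, R h₀ 1 (l₀ * x⁻¹) (mp.rtr x ψ) * R h₁ 1 x ψ :=
        Finset.sum_congr rfl (fun x _ => by rw [hterm x])
    _ = 0 := E0.symm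
end D


/-- (Proposition on actions, part 1.) Let `G` be a finite abelian group, `τ` trivial, and
suppose `H = k^G τ#_σ kF` admits a coquasitriangular structure. If `g ∈ G_f` and
`g ∉ G_{f'}`, then `g ◁ f'' ∉ G_{f'}` for every `f''` in the orbit `O_f`. -/
theorem ltl_not_mem_stabilizer_of_cqt {k F G : Type*} [Field k] [IsAlgClosed k]
    [CharZero k] [Group F] [CommGroup G] [Fintype G] [DecidableEq G]
    (mp : MatchedPair F G) (cd : CocycleData k F G mp)
    (htau : ∀ (g g' : G) (f : F), cd.tau g g' f = 1)
    (hR : ∃ R : G → F → G → F → k, IsCQT mp cd R)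
    (f f' : F) (g : G)
    (hgf : mp.rtr g f = f) (hgf' : mp.rtr g f' ≠ f') :
    ∀ f'' ∈ Set.range (fun x : G => mp.rtr x f), mp.rtr (mp.ltl g f'') f' ≠ f' := by
  obtain ⟨R, hc⟩ := hR
  rintro f'' ⟨x₀, rfl⟩
  have h1 : mp.rtr g (mp.rtr x₀ f) = mp.rtr x₀ f := by
    rw [← mp.mul_rtr, mul_comm, mp.mul_rtr, hgf]
  have h2 := key_claim mp cd htau R hc g (mp.rtr x₀ f) h1
  show mp.rtr (mp.ltl g (mp.rtr x₀ f)) f' ≠ f'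
  rw [h2]
  exact hgf'
end

section
/- Let G be a finite group, F a group, (F, G, ◁, ▷) a matched pair with u ▷ v = v for all u ∈ G, v ∈ F (so G_v = G for every v ∈ F), and σ, τ cocycle data. Suppose the Hopf algebra H = k^G τ#_σ kF admits a coquasitriangular structure. Fix f, f' ∈ F. Let V with basis {v^(1), …, v^(m)} be a simple right comodule over the coalgebra k^G_{τ_f}, with coaction ρ(v^(i)) = Σ_{l=1}^m v^(l) ⊗ (Σ_{g∈G} a^g_{li} p_g), and let W with basis {w^(1), …, w^(n)} be a simple right comodule over the coalgebra k^G_{τ_{f'}}, with coaction ρ(w^(j)) = Σ_{k=1}^n w^(k) ⊗ (Σ_{h∈G} b^h_{kj} p_h). Then for every g ∈ G: Σ_{i=1}^m Σ_{j=1}^n a^g_{ii} b^{g◁f}_{jj} σ(g; f, f') = Σ_{i=1}^m Σ_{j=1}^n a^{g◁f'}_{ii} b^g_{jj} σ(g; f', f). -/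
set_option maxHeartbeats 3200000 in
/-- Suppose `u ▷ v = v` for all `u ∈ G`, `v ∈ F` (so `G_v = G`), and
`H = k^G τ#_σ kF` admits a coquasitriangular structure. Fix `f, f' ∈ F`. Let `V`
(dimension `m`) be a simple right comodule over the coalgebra `k^G_{τ_f}`, with
coaction matrices `a u` (comodule axioms: `a 1 = 1`, `a u * a w = τ(u,w;f) • a (uw)`),
and `W` (dimension `n`) a simple right comodule over `k^G_{τ_{f'}}` with matrices
`b h`. Then for every `g ∈ G`:
`Σ_i Σ_j a^g_{ii} b^{g◁f}_{jj} σ(g;f,f') = Σ_i Σ_j a^{g◁f'}_{ii} b^g_{jj} σ(g;f',f)`. -/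
theorem trace_sigma_eq_of_cqt_trivial_rtr {k F G : Type*} [Field k] [IsAlgClosed k]
    [CharZero k] [Group F] [Group G] [Fintype G] [DecidableEq G]
    (mp : MatchedPair F G) (cd : CocycleData k F G mp)
    (hrtr : ∀ (u : G) (v : F), mp.rtr u v = v)
    (hR : ∃ R : G → F → G → F → k, IsCQT mp cd R)
    (f f' : F) (m n : ℕ) (hm : 0 < m) (hn : 0 < n)
    (a : G → Matrix (Fin m) (Fin m) k) (b : G → Matrix (Fin n) (Fin n) k)
    (ha1 : a 1 = 1)
    (hacoassoc : ∀ u w : G, a u * a w = ((cd.tau u w f : kˣ) : k) • a (u * w))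
    (hasimple : ∀ U : Submodule k (Fin m → k),
      (∀ v ∈ U, ∀ u : G, (a u).mulVec v ∈ U) → U = ⊥ ∨ U = ⊤)
    (hb1 : b 1 = 1)
    (hbcoassoc : ∀ u w : G, b u * b w = ((cd.tau u w f' : kˣ) : k) • b (u * w))
    (hbsimple : ∀ U : Submodule k (Fin n → k),
      (∀ v ∈ U, ∀ u : G, (b u).mulVec v ∈ U) → U = ⊥ ∨ U = ⊤) :
    ∀ g : G,
      (∑ i : Fin m, ∑ j : Fin n,
          a g i i * b (mp.ltl g f) j j * ((cd.sig g f f' : kˣ) : k))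
        = ∑ i : Fin m, ∑ j : Fin n,
            a (mp.ltl g f') i i * b g j j * ((cd.sig g f' f : kˣ) : k) := by
  classical
  obtain ⟨R, hcqt⟩ := hR
  obtain ⟨R', hRinv1, hRinv2⟩ := hcqt.conv_inv
  simp only [hrtr] at hRinv1 hRinv2
  -- `g ◁ 1 = 1`
  have hltl1 : ∀ v : F, mp.ltl 1 v = 1 := by
    intro v
    have h := mp.mul_ltl 1 1 v
    rw [one_mul, hrtr] at h
    exact (right_eq_mul.mp h)
  -- sum reindexing helpers
  have reidx : ∀ (z : G) (T : G → k), (∑ x : G, T (x * z⁻¹)) = ∑ x : G, T x := by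
    intro z T
    exact Fintype.sum_equiv (Equiv.mulRight z⁻¹) _ _ (fun x => rfl)
  have reidxL : ∀ (z : G) (T : G → k), (∑ x : G, T (z⁻¹ * x)) = ∑ x : G, T x := by
    intro z T
    exact Fintype.sum_equiv (Equiv.mulLeft z⁻¹) _ _ (fun x => rfl)
  have split2 : ∀ {α β : Type} [Fintype α] [Fintype β] (X : α → k) (Y : β → k) (c : k),
      (∑ r : α × β, X r.1 * Y r.2 * c) = (∑ x, X x) * (∑ y, Y y) * c := by
    intro α β _ _ X Y c
    rw [Fintype.sum_prod_type, Finset.sum_mul_sum, Finset.sum_mul]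
    refine Finset.sum_congr rfl fun x _ => ?_
    rw [Finset.sum_mul]
  -- sum reordering helpers
  have moveIn : ∀ {α : Type} [Fintype α] (T : α → G → G → G → G → k),
      (∑ r : α, ∑ u : G, ∑ h : G, ∑ x : G, ∑ y : G, T r u h x y)
        = ∑ u : G, ∑ h : G, ∑ x : G, ∑ y : G, ∑ r : α, T r u h x y := by
    intro α _ T
    refine Finset.sum_comm.trans ?_
    refine Finset.sum_congr rfl fun u _ => ?_
    refine Finset.sum_comm.trans ?_
    refine Finset.sum_congr rfl fun h _ => ?_
    refine Finset.sum_comm.trans ?_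
    refine Finset.sum_congr rfl fun x _ => ?_
    exact Finset.sum_comm
  have reorder : ∀ (T : G → G → G → G → k),
      (∑ u : G, ∑ h : G, ∑ x : G, ∑ y : G, T u h x y)
        = ∑ x : G, ∑ y : G, ∑ u : G, ∑ h : G, T u h x y := by
    intro T
    refine (Finset.sum_congr rfl fun u _ => Finset.sum_comm).trans ?_
    refine Finset.sum_comm.trans ?_
    refine Finset.sum_congr rfl fun x _ => ?_
    refine (Finset.sum_congr rfl fun u _ => Finset.sum_comm).trans ?_
    exact Finset.sum_comm
  -- contraction of two coefficient-matrix sums over `Fin m × Fin n`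
  have ENT : ∀ (c1 c2 : G → G → k) (i1 i2 : Fin m) (j1 j2 : Fin n),
      (∑ r : Fin m × Fin n,
          (∑ u' : G, ∑ h' : G, a u' i1 r.1 * b h' j1 r.2 * c1 u' h')
        * (∑ u : G, ∑ h : G, a u r.1 i2 * b h r.2 j2 * c2 u h))
      = ∑ u : G, ∑ h : G, ∑ u' : G, ∑ h' : G,
          (a u' * a u) i1 i2 * (b h' * b h) j1 j2 * c1 u' h' * c2 u h := by
    intro c1 c2 i1 i2 j1 j2
    have e1 : ∀ r : Fin m × Fin n,
        (∑ u' : G, ∑ h' : G, a u' i1 r.1 * b h' j1 r.2 * c1 u' h')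
          * (∑ u : G, ∑ h : G, a u r.1 i2 * b h r.2 j2 * c2 u h)
        = ∑ u : G, ∑ h : G, ∑ u' : G, ∑ h' : G,
            (a u' i1 r.1 * a u r.1 i2) * (b h' j1 r.2 * b h r.2 j2) * (c1 u' h' * c2 u h) := by
      intro r
      rw [Finset.mul_sum]
      refine Finset.sum_congr rfl fun u _ => ?_
      rw [Finset.mul_sum]
      refine Finset.sum_congr rfl fun h _ => ?_
      rw [Finset.sum_mul]
      refine Finset.sum_congr rfl fun u' _ => ?_
      rw [Finset.sum_mul]
      exact Finset.sum_congr rfl fun h' _ => by ring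
    rw [Finset.sum_congr rfl fun r _ => e1 r]
    refine (moveIn (fun (r : Fin m × Fin n) u h u' h' =>
      (a u' i1 r.1 * a u r.1 i2) * (b h' j1 r.2 * b h r.2 j2) * (c1 u' h' * c2 u h))).trans ?_
    refine Finset.sum_congr rfl fun u _ => Finset.sum_congr rfl fun h _ =>
      Finset.sum_congr rfl fun u' _ => Finset.sum_congr rfl fun h' _ => ?_
    refine (split2 (fun x : Fin m => a u' i1 x * a u x i2)
      (fun y : Fin n => b h' j1 y * b h y j2) (c1 u' h' * c2 u h)).trans ?_
    rw [← Matrix.mul_apply, ← Matrix.mul_apply]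
    ring
  -- contraction over `Fin n × Fin m`
  have ENT' : ∀ (c1 c2 : G → G → k) (i1 i2 : Fin m) (j1 j2 : Fin n),
      (∑ r : Fin n × Fin m,
          (∑ u' : G, ∑ h' : G, a u' i1 r.2 * b h' j1 r.1 * c1 u' h')
        * (∑ u : G, ∑ h : G, a u r.2 i2 * b h r.1 j2 * c2 u h))
      = ∑ u : G, ∑ h : G, ∑ u' : G, ∑ h' : G,
          (a u' * a u) i1 i2 * (b h' * b h) j1 j2 * c1 u' h' * c2 u h := by
    intro c1 c2 i1 i2 j1 j2
    have e1 : ∀ r : Fin n × Fin m,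
        (∑ u' : G, ∑ h' : G, a u' i1 r.2 * b h' j1 r.1 * c1 u' h')
          * (∑ u : G, ∑ h : G, a u r.2 i2 * b h r.1 j2 * c2 u h)
        = ∑ u : G, ∑ h : G, ∑ u' : G, ∑ h' : G,
            (b h' j1 r.1 * b h r.1 j2) * (a u' i1 r.2 * a u r.2 i2) * (c1 u' h' * c2 u h) := by
      intro r
      rw [Finset.mul_sum]
      refine Finset.sum_congr rfl fun u _ => ?_
      rw [Finset.mul_sum]
      refine Finset.sum_congr rfl fun h _ => ?_
      rw [Finset.sum_mul]
      refine Finset.sum_congr rfl fun u' _ => ?_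
      rw [Finset.sum_mul]
      exact Finset.sum_congr rfl fun h' _ => by ring
    rw [Finset.sum_congr rfl fun r _ => e1 r]
    refine (moveIn (fun (r : Fin n × Fin m) u h u' h' =>
      (b h' j1 r.1 * b h r.1 j2) * (a u' i1 r.2 * a u r.2 i2) * (c1 u' h' * c2 u h))).trans ?_
    refine Finset.sum_congr rfl fun u _ => Finset.sum_congr rfl fun h _ =>
      Finset.sum_congr rfl fun u' _ => Finset.sum_congr rfl fun h' _ => ?_
    refine (split2 (fun y : Fin n => b h' j1 y * b h y j2)
      (fun x : Fin m => a u' i1 x * a u x i2) (c1 u' h' * c2 u h)).trans ?_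
    rw [← Matrix.mul_apply, ← Matrix.mul_apply]
    ring
  -- the convolution-inverse identity collapses the quadruple sum
  have L1 : ∀ (c1 c2 : G → G → k),
      (∀ gg Hh : G, (∑ u : G, ∑ h : G,
          ((cd.tau (gg * u⁻¹) u f : kˣ) : k) * ((cd.tau (Hh * h⁻¹) h f' : kˣ) : k) *
            c1 (gg * u⁻¹) (Hh * h⁻¹) * c2 u h)
        = (if gg = 1 then (1:k) else 0) * (if Hh = 1 then (1:k) else 0)) →
      ∀ (i1 i2 : Fin m) (j1 j2 : Fin n),
        (∑ u : G, ∑ h : G, ∑ u' : G, ∑ h' : G,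
            (a u' * a u) i1 i2 * (b h' * b h) j1 j2 * c1 u' h' * c2 u h)
          = (if i1 = i2 then (1:k) else 0) * (if j1 = j2 then (1:k) else 0) := by
    intro c1 c2 hc i1 i2 j1 j2
    have e1 : ∀ u h : G,
        (∑ u' : G, ∑ h' : G, (a u' * a u) i1 i2 * (b h' * b h) j1 j2 * c1 u' h' * c2 u h)
          = ∑ gg : G, ∑ Hh : G,
              a gg i1 i2 * b Hh j1 j2 *
                (((cd.tau (gg * u⁻¹) u f : kˣ) : k) * ((cd.tau (Hh * h⁻¹) h f' : kˣ) : k) *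
                  c1 (gg * u⁻¹) (Hh * h⁻¹) * c2 u h) := by
      intro u h
      refine ((reidx u fun u' => ∑ h' : G,
        (a u' * a u) i1 i2 * (b h' * b h) j1 j2 * c1 u' h' * c2 u h).symm).trans ?_
      refine Finset.sum_congr rfl fun gg _ => ?_
      refine ((reidx h fun h' => (a (gg * u⁻¹) * a u) i1 i2 * (b h' * b h) j1 j2 *
        c1 (gg * u⁻¹) h' * c2 u h).symm).trans ?_
      refine Finset.sum_congr rfl fun Hh _ => ?_
      rw [hacoassoc, hbcoassoc, inv_mul_cancel_right, inv_mul_cancel_right,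
        Matrix.smul_apply, Matrix.smul_apply, smul_eq_mul, smul_eq_mul]
      ring
    rw [Finset.sum_congr rfl fun u _ => Finset.sum_congr rfl fun h _ => e1 u h, reorder]
    have e2 : ∀ gg Hh : G,
        (∑ u : G, ∑ h : G,
            a gg i1 i2 * b Hh j1 j2 *
              (((cd.tau (gg * u⁻¹) u f : kˣ) : k) * ((cd.tau (Hh * h⁻¹) h f' : kˣ) : k) *
                c1 (gg * u⁻¹) (Hh * h⁻¹) * c2 u h))
          = a gg i1 i2 * b Hh j1 j2 *
              ((if gg = 1 then (1:k) else 0) * (if Hh = 1 then (1:k) else 0)) := by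
      intro gg Hh
      rw [← hc gg Hh, Finset.mul_sum]
      refine Finset.sum_congr rfl fun u _ => ?_
      rw [Finset.mul_sum]
    rw [Finset.sum_congr rfl fun gg _ => Finset.sum_congr rfl fun Hh _ => e2 gg Hh]
    simp only [mul_ite, mul_one, mul_zero, Finset.sum_ite_eq', Finset.mem_univ, if_true]
    rw [ha1, hb1]
    by_cases h1 : i1 = i2 <;> by_cases h2 : j1 = j2 <;>
      simp [Matrix.one_apply, h1, h2]
  -- the braiding matrix and its inverse, and the two tensor-product coaction matrices
  set M : Matrix (Fin n × Fin m) (Fin m × Fin n) k :=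
    fun p q => ∑ u : G, ∑ h : G, a u p.2 q.1 * b h p.1 q.2 * R u f h f' with hMdef
  set M' : Matrix (Fin m × Fin n) (Fin n × Fin m) k :=
    fun q p => ∑ u : G, ∑ h : G, a u q.1 p.2 * b h q.2 p.1 * R' u f h f' with hM'def
  set C : G → Matrix (Fin m × Fin n) (Fin m × Fin n) k :=
    fun z p q => a z p.1 q.1 * b (mp.ltl z f) p.2 q.2 * ((cd.sig z f f' : kˣ) : k) with hCdef
  set D : G → Matrix (Fin n × Fin m) (Fin n × Fin m) k :=
    fun z p q => b z p.1 q.1 * a (mp.ltl z f') p.2 q.2 * ((cd.sig z f' f : kˣ) : k) with hDdef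
  set LC : G → G → G → k := fun gg Hh z =>
    ((cd.tau (gg * z⁻¹) z f : kˣ) : k)
      * ((cd.tau (Hh * (mp.ltl z f)⁻¹) (mp.ltl z f) f' : kˣ) : k)
      * R (gg * z⁻¹) f (Hh * (mp.ltl z f)⁻¹) f' * ((cd.sig z f f' : kˣ) : k) with hLCdef
  set RC : G → G → G → k := fun gg Hh z =>
    ((cd.tau (mp.ltl z f') ((mp.ltl z f')⁻¹ * gg) f : kˣ) : k)
      * ((cd.tau z (z⁻¹ * Hh) f' : kˣ) : k)
      * R ((mp.ltl z f')⁻¹ * gg) f (z⁻¹ * Hh) f' * ((cd.sig z f' f : kˣ) : k) with hRCdef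
  -- M' is a two-sided inverse for M
  have hA : M' * M = 1 := by
    ext p q
    rw [Matrix.mul_apply]
    simp only [hM'def, hMdef]
    refine ((ENT' (fun u' h' => R' u' f h' f') (fun u h => R u f h f') p.1 q.1 p.2 q.2)).trans
      ((L1 _ _ (fun gg Hh => hRinv2 gg Hh f f') p.1 q.1 p.2 q.2).trans ?_)
    by_cases h1 : p.1 = q.1 <;> by_cases h2 : p.2 = q.2 <;>
      simp [Matrix.one_apply, Prod.ext_iff, h1, h2]
  have hB : M * M' = 1 := by
    ext p q
    rw [Matrix.mul_apply]
    simp only [hMdef, hM'def]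
    refine ((ENT (fun u' h' => R u' f h' f') (fun u h => R' u f h f') p.2 q.2 p.1 q.1)).trans
      ((L1 _ _ (fun gg Hh => hRinv1 gg Hh f f') p.2 q.2 p.1 q.1).trans ?_)
    by_cases h1 : p.1 = q.1 <;> by_cases h2 : p.2 = q.2 <;>
      simp [Matrix.one_apply, Prod.ext_iff, h1, h2]
  -- helper: move one sum inside two
  have moveIn2 : ∀ {α : Type} [Fintype α] (T : α → G → G → k),
      (∑ r : α, ∑ x : G, ∑ y : G, T r x y) = ∑ x : G, ∑ y : G, ∑ r : α, T r x y := by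
    intro α _ T
    refine Finset.sum_comm.trans ?_
    exact Finset.sum_congr rfl fun x _ => Finset.sum_comm
  -- entries of M * C z
  have L2 : ∀ (z : G) (p : Fin n × Fin m) (q : Fin m × Fin n),
      (M * C z) p q = ∑ gg : G, ∑ Hh : G, a gg p.2 q.1 * b Hh p.1 q.2 * LC gg Hh z := by
    intro z p q
    rw [Matrix.mul_apply]
    simp only [hMdef, hCdef]
    have e1 : ∀ r : Fin m × Fin n,
        (∑ u : G, ∑ h : G, a u p.2 r.1 * b h p.1 r.2 * R u f h f')
            * (a z r.1 q.1 * b (mp.ltl z f) r.2 q.2 * ((cd.sig z f f' : kˣ) : k))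
          = ∑ u' : G, ∑ h' : G,
              (a u' p.2 r.1 * a z r.1 q.1) * (b h' p.1 r.2 * b (mp.ltl z f) r.2 q.2)
                * (R u' f h' f' * ((cd.sig z f f' : kˣ) : k)) := by
      intro r
      rw [Finset.sum_mul]
      refine Finset.sum_congr rfl fun u' _ => ?_
      rw [Finset.sum_mul]
      exact Finset.sum_congr rfl fun h' _ => by ring
    rw [Finset.sum_congr rfl fun r _ => e1 r]
    refine ((moveIn2 (fun (r : Fin m × Fin n) u' h' =>
      (a u' p.2 r.1 * a z r.1 q.1) * (b h' p.1 r.2 * b (mp.ltl z f) r.2 q.2)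
        * (R u' f h' f' * ((cd.sig z f f' : kˣ) : k))))).trans ?_
    have e2 : ∀ u' h' : G,
        (∑ r : Fin m × Fin n,
            (a u' p.2 r.1 * a z r.1 q.1) * (b h' p.1 r.2 * b (mp.ltl z f) r.2 q.2)
              * (R u' f h' f' * ((cd.sig z f f' : kˣ) : k)))
          = ((cd.tau u' z f : kˣ) : k) * ((cd.tau h' (mp.ltl z f) f' : kˣ) : k)
              * (a (u' * z) p.2 q.1 * b (h' * mp.ltl z f) p.1 q.2)
              * (R u' f h' f' * ((cd.sig z f f' : kˣ) : k)) := by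
      intro u' h'
      refine (split2 (fun x : Fin m => a u' p.2 x * a z x q.1)
        (fun y : Fin n => b h' p.1 y * b (mp.ltl z f) y q.2)
        (R u' f h' f' * ((cd.sig z f f' : kˣ) : k))).trans ?_
      rw [← Matrix.mul_apply, ← Matrix.mul_apply, hacoassoc, hbcoassoc,
        Matrix.smul_apply, Matrix.smul_apply, smul_eq_mul, smul_eq_mul]
      ring
    rw [Finset.sum_congr rfl fun u' _ => Finset.sum_congr rfl fun h' _ => e2 u' h']
    refine ((reidx z fun u' => ∑ h' : G,
        ((cd.tau u' z f : kˣ) : k) * ((cd.tau h' (mp.ltl z f) f' : kˣ) : k)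
          * (a (u' * z) p.2 q.1 * b (h' * mp.ltl z f) p.1 q.2)
          * (R u' f h' f' * ((cd.sig z f f' : kˣ) : k))).symm).trans ?_
    refine Finset.sum_congr rfl fun gg _ => ?_
    refine ((reidx (mp.ltl z f) fun h' =>
        ((cd.tau (gg * z⁻¹) z f : kˣ) : k) * ((cd.tau h' (mp.ltl z f) f' : kˣ) : k)
          * (a (gg * z⁻¹ * z) p.2 q.1 * b (h' * mp.ltl z f) p.1 q.2)
          * (R (gg * z⁻¹) f h' f' * ((cd.sig z f f' : kˣ) : k))).symm).trans ?_
    refine Finset.sum_congr rfl fun Hh _ => ?_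
    rw [inv_mul_cancel_right, inv_mul_cancel_right, hLCdef]
    ring
  -- entries of D z * M
  have L3 : ∀ (z : G) (p : Fin n × Fin m) (q : Fin m × Fin n),
      (D z * M) p q = ∑ gg : G, ∑ Hh : G, a gg p.2 q.1 * b Hh p.1 q.2 * RC gg Hh z := by
    intro z p q
    rw [Matrix.mul_apply]
    simp only [hMdef, hDdef]
    have e1 : ∀ r : Fin n × Fin m,
        (b z p.1 r.1 * a (mp.ltl z f') p.2 r.2 * ((cd.sig z f' f : kˣ) : k))
            * (∑ u : G, ∑ h : G, a u r.2 q.1 * b h r.1 q.2 * R u f h f')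
          = ∑ u : G, ∑ h : G,
              (b z p.1 r.1 * b h r.1 q.2) * (a (mp.ltl z f') p.2 r.2 * a u r.2 q.1)
                * (R u f h f' * ((cd.sig z f' f : kˣ) : k)) := by
      intro r
      rw [Finset.mul_sum]
      refine Finset.sum_congr rfl fun u _ => ?_
      rw [Finset.mul_sum]
      exact Finset.sum_congr rfl fun h _ => by ring
    rw [Finset.sum_congr rfl fun r _ => e1 r]
    refine ((moveIn2 (fun (r : Fin n × Fin m) u h =>
      (b z p.1 r.1 * b h r.1 q.2) * (a (mp.ltl z f') p.2 r.2 * a u r.2 q.1)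
        * (R u f h f' * ((cd.sig z f' f : kˣ) : k))))).trans ?_
    have e2 : ∀ u h : G,
        (∑ r : Fin n × Fin m,
            (b z p.1 r.1 * b h r.1 q.2) * (a (mp.ltl z f') p.2 r.2 * a u r.2 q.1)
              * (R u f h f' * ((cd.sig z f' f : kˣ) : k)))
          = ((cd.tau (mp.ltl z f') u f : kˣ) : k) * ((cd.tau z h f' : kˣ) : k)
              * (a (mp.ltl z f' * u) p.2 q.1 * b (z * h) p.1 q.2)
              * (R u f h f' * ((cd.sig z f' f : kˣ) : k)) := by
      intro u h
      refine (split2 (fun y : Fin n => b z p.1 y * b h y q.2)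
        (fun x : Fin m => a (mp.ltl z f') p.2 x * a u x q.1)
        (R u f h f' * ((cd.sig z f' f : kˣ) : k))).trans ?_
      rw [← Matrix.mul_apply, ← Matrix.mul_apply, hacoassoc, hbcoassoc,
        Matrix.smul_apply, Matrix.smul_apply, smul_eq_mul, smul_eq_mul]
      ring
    rw [Finset.sum_congr rfl fun u _ => Finset.sum_congr rfl fun h _ => e2 u h]
    refine ((reidxL (mp.ltl z f') fun u => ∑ h : G,
        ((cd.tau (mp.ltl z f') u f : kˣ) : k) * ((cd.tau z h f' : kˣ) : k)
          * (a (mp.ltl z f' * u) p.2 q.1 * b (z * h) p.1 q.2)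
          * (R u f h f' * ((cd.sig z f' f : kˣ) : k))).symm).trans ?_
    refine Finset.sum_congr rfl fun gg _ => ?_
    refine ((reidxL z fun h =>
        ((cd.tau (mp.ltl z f') ((mp.ltl z f')⁻¹ * gg) f : kˣ) : k) * ((cd.tau z h f' : kˣ) : k)
          * (a (mp.ltl z f' * ((mp.ltl z f')⁻¹ * gg)) p.2 q.1 * b (z * h) p.1 q.2)
          * (R ((mp.ltl z f')⁻¹ * gg) f h f' * ((cd.sig z f' f : kˣ) : k))).symm).trans ?_
    refine Finset.sum_congr rfl fun Hh _ => ?_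
    rw [mul_inv_cancel_left, mul_inv_cancel_left, hRCdef]
    ring
  -- evaluation of the left side of qcomm at the basis point (z, f*f')
  have hql : ∀ gg Hh z : G,
      ((∑ x : G, ∑ y : G,
        (((cd.tau (gg * x⁻¹) x f : kˣ) : k) * ((cd.tau (Hh * y⁻¹) y f' : kˣ) : k) *
          R (gg * x⁻¹) f (Hh * y⁻¹) f') • mulB mp cd (x, f) (y, f')) : (G × F) →₀ k) (z, f * f')
        = LC gg Hh z := by
    intro gg Hh z
    simp only [Finset.sum_apply', Finsupp.smul_apply, smul_eq_mul, mulB,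
      apply_ite (fun (φ : (G × F) →₀ k) => φ (z, f * f')), Finsupp.single_apply,
      Finsupp.coe_zero, Pi.zero_apply, Prod.mk.injEq]
    simp only [and_true, mul_ite, mul_zero, Finset.sum_ite_eq, Finset.sum_ite_eq',
      Finset.mem_univ, if_true, hLCdef]
  -- evaluation of the right side of qcomm at the basis point (z, f*f')
  have hqr : ∀ gg Hh z : G,
      ((∑ x : G, ∑ y : G,
        (((cd.tau (gg * x⁻¹) x f : kˣ) : k) * ((cd.tau (Hh * y⁻¹) y f' : kˣ) : k) *
          R x f y f') • mulB mp cd (Hh * y⁻¹, f') (gg * x⁻¹, f)) : (G × F) →₀ k) (z, f * f')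
        = if f' * f = f * f' then RC gg Hh z else 0 := by
    intro gg Hh z
    simp only [Finset.sum_apply', Finsupp.smul_apply, smul_eq_mul, mulB,
      apply_ite (fun (φ : (G × F) →₀ k) => φ (z, f * f')), Finsupp.single_apply,
      Finsupp.coe_zero, Pi.zero_apply, Prod.mk.injEq]
    by_cases hcF : f' * f = f * f'
    · rw [if_pos hcF]
      have hy : ∀ y : G, (Hh * y⁻¹ = z) = (y = z⁻¹ * Hh) :=
        fun y => propext ⟨fun h => by rw [← h]; group, fun h => by rw [h]; group⟩
      have hx : ∀ x : G, (mp.ltl z f' = gg * x⁻¹) = (x = (mp.ltl z f')⁻¹ * gg) :=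
        fun x => propext ⟨fun h => by rw [h]; group, fun h => by rw [h]; group⟩
      have hzz : Hh * (z⁻¹ * Hh)⁻¹ = z := by group
      have hgx : gg * ((mp.ltl z f')⁻¹ * gg)⁻¹ = mp.ltl z f' := by group
      simp only [hcF, and_true, hy, mul_ite, mul_zero]
      rw [Finset.sum_comm]
      refine (Finset.sum_eq_single_of_mem (z⁻¹ * Hh) (Finset.mem_univ _) ?_).trans ?_
      · intro y _ hne
        refine Finset.sum_eq_zero fun x _ => ?_
        simp [hne]
      · simp only [hzz, hx, mul_ite, mul_zero, eq_self_iff_true, if_true,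
          Finset.sum_ite_eq', Finset.mem_univ, hgx, hRCdef]
    · rw [if_neg hcF]
      refine Finset.sum_eq_zero fun x _ => Finset.sum_eq_zero fun y _ => ?_
      simp [hcF]
  -- the coefficient identity coming from quasi-commutativity
  have S1 : ∀ gg Hh z : G, LC gg Hh z = if f' * f = f * f' then RC gg Hh z else 0 := by
    intro gg Hh z
    have h := hcqt.qcomm gg Hh f f'
    simp only [hrtr] at h
    exact (hql gg Hh z).symm.trans ((DFunLike.congr_fun h (z, f * f')).trans (hqr gg Hh z))
  have hC1 : C 1 = 1 := by
    ext p q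
    by_cases h1 : p.1 = q.1 <;> by_cases h2 : p.2 = q.2 <;>
      simp [hCdef, hltl1, ha1, hb1, cd.one_sig, Matrix.one_apply, Prod.ext_iff, h1, h2]
  -- the coquasitriangular structure forces f'f = ff' here
  have hcomm : f' * f = f * f' := by
    by_contra hne
    have hM0 : M = 0 := by
      have h0 : M * C 1 = 0 := by
        ext p q
        rw [L2 1 p q, Matrix.zero_apply]
        refine Finset.sum_eq_zero fun gg _ => Finset.sum_eq_zero fun Hh _ => ?_
        rw [S1 gg Hh 1, if_neg hne, mul_zero]
      rwa [hC1, Matrix.mul_one] at h0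
    have h1 := congrFun (congrFun hA ((⟨0, hm⟩ : Fin m), (⟨0, hn⟩ : Fin n)))
      ((⟨0, hm⟩ : Fin m), (⟨0, hn⟩ : Fin n))
    rw [hM0, Matrix.mul_zero] at h1
    simp [Matrix.zero_apply, Matrix.one_apply] at h1
  -- the braiding intertwines the two coactions
  have hMCD : ∀ z : G, M * C z = D z * M := by
    intro z
    ext p q
    rw [L2 z p q, L3 z p q]
    refine Finset.sum_congr rfl fun gg _ => Finset.sum_congr rfl fun Hh _ => ?_
    rw [S1 gg Hh z, if_pos hcomm]
  intro g
  have hCD : Matrix.trace (C g) = Matrix.trace (D g) := by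
    have h1 : C g = M' * (D g * M) := by
      rw [← hMCD g, ← Matrix.mul_assoc, hA, Matrix.one_mul]
    rw [h1, Matrix.trace_mul_comm, Matrix.mul_assoc, hB, Matrix.mul_one]
  have t1 : Matrix.trace (C g)
      = ∑ i : Fin m, ∑ j : Fin n, a g i i * b (mp.ltl g f) j j * ((cd.sig g f f' : kˣ) : k) := by
    rw [Matrix.trace, Fintype.sum_prod_type]
    simp [Matrix.diag, hCdef]
  have t2 : Matrix.trace (D g)
      = ∑ j : Fin n, ∑ i : Fin m, b g j j * a (mp.ltl g f') i i * ((cd.sig g f' f : kˣ) : k) := by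
    rw [Matrix.trace, Fintype.sum_prod_type]
    simp [Matrix.diag, hDdef]
  rw [← t1, hCD, t2, Finset.sum_comm]
  exact Finset.sum_congr rfl fun i _ => Finset.sum_congr rfl fun j _ => by ring
end

section
/- Let G be a finite group, F a group, (F, G, ◁, ▷) a matched pair with u ▷ v = v for all u ∈ G, v ∈ F, and σ, τ trivial, and suppose the Hopf algebra H = k^G # kF admits a coquasitriangular structure. Let π : G → G' be a surjective group homomorphism onto an abelian group G'. Let V = span{v} and W = span{w} be simple right k^{G'}-comodules with coactions ρ(v) = v ⊗ Σ_{g∈G'} a^g p_g and ρ(w) = w ⊗ Σ_{h∈G'} b^h p_h, where a^g, b^h ∈ k (regarded as k^G-comodules via the coalgebra embedding k^{G'} → k^G, p_{g'} ↦ Σ_{x∈G, π(x)=g'} p_x). Then for all f, f' ∈ F and x ∈ G: a^{π(x)} b^{π(x ◁ f)} = a^{π(x ◁ f')} b^{π(x)}. -/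
section Aux

variable {k F G : Type*} [Field k] [Group F] [Group G] [Fintype G] [DecidableEq G]

private lemma sum_mulRight (g : G) (A : G → k) : ∑ u : G, A (u * g) = ∑ u : G, A u :=
  Fintype.sum_equiv (Equiv.mulRight g) _ _ (fun _ => rfl)

private lemma swap3 (B : G → G → G → k) :
    ∑ y : G, ∑ g : G, ∑ h : G, B y g h = ∑ g : G, ∑ h : G, ∑ y : G, B y g h := by
  rw [Finset.sum_comm]
  exact Finset.sum_congr rfl fun g _ => Finset.sum_comm

private lemma swap4 (A : G → G → G → G → k) :
    ∑ x : G, ∑ y : G, ∑ g : G, ∑ h : G, A x y g h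
      = ∑ g : G, ∑ h : G, ∑ x : G, ∑ y : G, A x y g h := by
  have h1 : ∀ x : G, ∑ y : G, ∑ g : G, ∑ h : G, A x y g h
      = ∑ g : G, ∑ h : G, ∑ y : G, A x y g h := fun x => swap3 _
  rw [Finset.sum_congr rfl fun x _ => h1 x]
  exact swap3 _

private lemma char_ltl_invariant (mp : MatchedPair F G) (cd : CocycleData k F G mp)
    (hrtr : ∀ (u : G) (v : F), mp.rtr u v = v)
    (hsig : ∀ (g : G) (f f' : F), cd.sig g f f' = 1)
    (htau : ∀ (g g' : G) (f : F), cd.tau g g' f = 1)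
    (R : G → F → G → F → k) (hcqt : IsCQT mp cd R)
    (φ : G → k) (hφ1 : φ 1 = 1) (hφm : ∀ u w : G, φ (u * w) = φ u * φ w)
    (f : F) (z : G) : φ (mp.ltl z f) = φ z := by
  set C : k := ∑ u : G, ∑ v : G, φ u * R u 1 v f with hC
  -- reindexing identity
  have reindex : ∀ w : G, (∑ g : G, ∑ h : G, φ g * R (g * w⁻¹) 1 (h * w⁻¹) f) = φ w * C := by
    intro w
    rw [← sum_mulRight w (fun g => ∑ h : G, φ g * R (g * w⁻¹) 1 (h * w⁻¹) f)]
    have : ∀ u : G, (∑ h : G, φ (u * w) * R (u * w * w⁻¹) 1 (h * w⁻¹) f)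
        = ∑ v : G, φ (u * w) * R u 1 v f := by
      intro u
      rw [← sum_mulRight w (fun h => φ (u * w) * R (u * w * w⁻¹) 1 (h * w⁻¹) f)]
      simp [mul_inv_cancel_right]
    rw [Finset.sum_congr rfl fun u _ => this u]
    rw [hC, Finset.mul_sum]
    refine Finset.sum_congr rfl fun u _ => ?_
    rw [Finset.mul_sum]
    refine Finset.sum_congr rfl fun v _ => ?_
    rw [hφm]; ring
  -- C is nonzero, via convolution invertibility
  obtain ⟨R', hinv, -⟩ := hcqt.conv_inv
  have h1 : ∀ g h : G, (∑ x : G, ∑ y : G, R (g * x⁻¹) 1 (h * y⁻¹) f * R' x 1 y f)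
      = (if g = 1 then (1:k) else 0) * (if h = 1 then (1:k) else 0) := by
    intro g h
    have := hinv g h 1 f
    simpa [htau, hrtr] using this
  have hCne : C ≠ 0 := by
    have key : (∑ x : G, ∑ y : G, φ x * R' x 1 y f) * C = 1 := by
      have e1 : (∑ x : G, ∑ y : G, φ x * R' x 1 y f) * C
          = ∑ x : G, ∑ y : G, ∑ g : G, ∑ h : G,
              φ g * (R (g * x⁻¹) 1 (h * y⁻¹) f * R' x 1 y f) := by
        rw [Finset.sum_mul]
        refine Finset.sum_congr rfl fun x _ => ?_
        rw [Finset.sum_mul]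
        refine Finset.sum_congr rfl fun y _ => ?_
        rw [← sum_mulRight x (fun g => ∑ h : G,
          φ g * (R (g * x⁻¹) 1 (h * y⁻¹) f * R' x 1 y f))]
        have : ∀ u : G, (∑ h : G,
            φ (u * x) * (R (u * x * x⁻¹) 1 (h * y⁻¹) f * R' x 1 y f))
            = ∑ v : G, φ (u * x) * (R u 1 v f * R' x 1 y f) := by
          intro u
          rw [← sum_mulRight y (fun h =>
            φ (u * x) * (R (u * x * x⁻¹) 1 (h * y⁻¹) f * R' x 1 y f))]
          simp [mul_inv_cancel_right]
        rw [Finset.sum_congr rfl fun u _ => this u]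
        rw [hC, Finset.mul_sum]
        refine Finset.sum_congr rfl fun u _ => ?_
        rw [Finset.mul_sum]
        refine Finset.sum_congr rfl fun v _ => ?_
        rw [hφm]; ring
      rw [e1, swap4]
      have e2 : ∀ g h : G, (∑ x : G, ∑ y : G,
          φ g * (R (g * x⁻¹) 1 (h * y⁻¹) f * R' x 1 y f))
          = φ g * ((if g = 1 then (1:k) else 0) * (if h = 1 then (1:k) else 0)) := by
        intro g h
        rw [← h1 g h, Finset.mul_sum]
        exact Finset.sum_congr rfl fun x _ => by rw [Finset.mul_sum]
      rw [Finset.sum_congr rfl fun g _ => Finset.sum_congr rfl fun h _ => e2 g h]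
      simp [Finset.sum_ite_eq', hφ1]
    intro h0
    rw [h0, mul_zero] at key
    exact zero_ne_one key
  -- the quasi-commutativity computation
  have hmain : φ z * C = φ (mp.ltl z f) * C := by
    have hq : ∀ g h : G, R (g * z⁻¹) 1 (h * z⁻¹) f
        = ∑ x : G, ∑ y : G, R x 1 y f *
            ((if mp.ltl (h * y⁻¹) f = g * x⁻¹ then (1:k) else 0) *
             (if h * y⁻¹ = z then (1:k) else 0)) := by
      intro g h
      have hqc := DFunLike.congr_fun (hcqt.qcomm g h 1 f) (z, f)
      simp only [Finsupp.coe_finset_sum, Finset.sum_apply, Finsupp.smul_apply,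
        htau, hrtr, Units.val_one, one_mul, mulB, mp.ltl_one, hsig,
        smul_eq_mul, mul_one] at hqc
      have eL : (∑ x : G, ∑ y : G, R (g * x⁻¹) 1 (h * y⁻¹) f *
            ((if x = y then (Finsupp.single (x, f) (1:k)) else 0) (z, f)))
          = R (g * z⁻¹) 1 (h * z⁻¹) f := by
        have e : ∀ x y : G, R (g * x⁻¹) 1 (h * y⁻¹) f *
              ((if x = y then (Finsupp.single (x, f) (1:k)) else 0) (z, f))
            = if y = x then (if x = z then R (g * x⁻¹) 1 (h * x⁻¹) f else 0) else 0 := by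
          intro x y
          by_cases hxy : x = y
          · subst hxy
            by_cases hxz : x = z <;> simp [hxz, Finsupp.single_apply, Prod.ext_iff]
          · simp [hxy, Ne.symm hxy]
        rw [Finset.sum_congr rfl fun x _ => Finset.sum_congr rfl fun y _ => e x y]
        simp [Finset.sum_ite_eq']
      have eR : ∀ x y : G, R x 1 y f *
            ((if mp.ltl (h * y⁻¹) f = g * x⁻¹ then (Finsupp.single (h * y⁻¹, f) (1:k))
              else 0) (z, f))
          = R x 1 y f * ((if mp.ltl (h * y⁻¹) f = g * x⁻¹ then (1:k) else 0) *
              (if h * y⁻¹ = z then (1:k) else 0)) := by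
        intro x y
        by_cases hz' : h * y⁻¹ = z
        · simp only [hz']
          by_cases hc : mp.ltl z f = g * x⁻¹ <;> simp [hc, Finsupp.single_apply]
        · by_cases hc : mp.ltl (h * y⁻¹) f = g * x⁻¹ <;>
            simp [hc, hz', Finsupp.single_apply, Prod.ext_iff]
      rw [eL] at hqc
      rw [hqc]
      exact Finset.sum_congr rfl fun x _ => Finset.sum_congr rfl fun y _ => eR x y
    calc φ z * C = ∑ g : G, ∑ h : G, φ g * R (g * z⁻¹) 1 (h * z⁻¹) f := (reindex z).symm
      _ = ∑ g : G, ∑ h : G, ∑ x : G, ∑ y : G, φ g * (R x 1 y f *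
            ((if mp.ltl (h * y⁻¹) f = g * x⁻¹ then (1:k) else 0) *
             (if h * y⁻¹ = z then (1:k) else 0))) := by
          refine Finset.sum_congr rfl fun g _ => Finset.sum_congr rfl fun h _ => ?_
          rw [hq g h, Finset.mul_sum]
          exact Finset.sum_congr rfl fun x _ => by rw [Finset.mul_sum]
      _ = ∑ x : G, ∑ y : G, ∑ g : G, ∑ h : G, φ g * (R x 1 y f *
            ((if mp.ltl (h * y⁻¹) f = g * x⁻¹ then (1:k) else 0) *
             (if h * y⁻¹ = z then (1:k) else 0))) := (swap4 _).symm
      _ = ∑ x : G, ∑ y : G, φ (mp.ltl z f * x) * R x 1 y f := by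
          refine Finset.sum_congr rfl fun x _ => Finset.sum_congr rfl fun y _ => ?_
          rw [Finset.sum_comm]
          have hh : ∀ h : G, (∑ g : G, φ g * (R x 1 y f *
              ((if mp.ltl (h * y⁻¹) f = g * x⁻¹ then (1:k) else 0) *
               (if h * y⁻¹ = z then (1:k) else 0))))
              = if h = z * y then φ (mp.ltl z f * x) * R x 1 y f else 0 := by
            intro h
            by_cases hz : h = z * y
            · subst hz
              have hzy : z * y * y⁻¹ = z := by group
              rw [hzy] -- might not rewrite inside ite; handle below
              have : ∀ g : G, (φ g * (R x 1 y f *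
                  ((if mp.ltl z f = g * x⁻¹ then (1:k) else 0) *
                   (if z = z then (1:k) else 0))))
                  = if g = mp.ltl z f * x then φ (mp.ltl z f * x) * R x 1 y f else 0 := by
                intro g
                by_cases hg : g = mp.ltl z f * x
                · subst hg
                  simp [mul_inv_cancel_right]
                · have : ¬ (mp.ltl z f = g * x⁻¹) := by
                    intro hcon
                    exact hg (by rw [hcon]; group)
                  simp [this, hg]
              rw [Finset.sum_congr rfl fun g _ => this g]
              simp [Finset.sum_ite_eq']
            · have hne : ¬ (h * y⁻¹ = z) := by
                intro hcon
                exact hz (by rw [← hcon]; group)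
              simp [hne, hz]
          rw [Finset.sum_congr rfl fun h _ => hh h]
          simp [Finset.sum_ite_eq']
      _ = φ (mp.ltl z f) * C := by
          rw [hC, Finset.mul_sum]
          refine Finset.sum_congr rfl fun x _ => ?_
          rw [Finset.mul_sum]
          refine Finset.sum_congr rfl fun y _ => ?_
          rw [hφm]; ring
  exact mul_right_cancel₀ hCne hmain.symm

end Aux

/-- Suppose `u ▷ v = v` for all `u ∈ G`, `v ∈ F`, `σ` and `τ` are trivial, and
`H = k^G # kF` admits a coquasitriangular structure. Let `π : G → G'` be a surjective
homomorphism onto an abelian group `G'`, and let `V = span{v}`, `W = span{w}` be simple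
right `k^{G'}`-comodules given by coaction coefficients `a, b : G' → k` (the comodule
axioms for a 1-dimensional `k^{G'}`-comodule amount to `a 1 = 1` and
`a (u w) = a u * a w`). Then `a^{π(x)} b^{π(x ◁ f)} = a^{π(x ◁ f')} b^{π(x)}` for all
`f, f' ∈ F`, `x ∈ G`. -/
theorem onedim_comodule_coeffs_eq_of_cqt {k F G G' : Type*} [Field k] [IsAlgClosed k]
    [CharZero k] [Group F] [Group G] [Fintype G] [DecidableEq G] [CommGroup G']
    (mp : MatchedPair F G) (cd : CocycleData k F G mp)
    (hrtr : ∀ (u : G) (v : F), mp.rtr u v = v)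
    (hsig : ∀ (g : G) (f f' : F), cd.sig g f f' = 1)
    (htau : ∀ (g g' : G) (f : F), cd.tau g g' f = 1)
    (hR : ∃ R : G → F → G → F → k, IsCQT mp cd R)
    (π : G →* G') (hπ : Function.Surjective π)
    (a b : G' → k)
    (ha1 : a 1 = 1) (hamul : ∀ u w : G', a (u * w) = a u * a w)
    (hb1 : b 1 = 1) (hbmul : ∀ u w : G', b (u * w) = b u * b w) :
    ∀ (f f' : F) (x : G),
      a (π x) * b (π (mp.ltl x f)) = a (π (mp.ltl x f')) * b (π x) := by
  obtain ⟨R, hcqt⟩ := hR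
  have ha' : ∀ (f : F) (z : G), a (π (mp.ltl z f)) = a (π z) := fun f z =>
    char_ltl_invariant mp cd hrtr hsig htau R hcqt (fun g => a (π g))
      (by simp [ha1]) (fun u w => by simp [map_mul, hamul]) f z
  have hb' : ∀ (f : F) (z : G), b (π (mp.ltl z f)) = b (π z) := fun f z =>
    char_ltl_invariant mp cd hrtr hsig htau R hcqt (fun g => b (π g))
      (by simp [hb1]) (fun u w => by simp [map_mul, hbmul]) f z
  intro f f' x
  rw [ha' f' x, hb' f x]
end
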